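/- Let κ and κ' be cardinals with κ infinite and κ ≥ 2^{κ'}. Then any functor from the category of nonempty sets of cardinality at most κ to the category of nonempty sets of cardinality at most κ' is isomorphic to a constant functor. -/

import Mathlib

open CategoryTheory

universe u

theorem stmt_7 (κ κ' : Cardinal.{u}) (hκ : Cardinal.aleph0 ≤ κ) (h : 2 ^ κ' ≤ κ)
    (F : ObjectProperty.FullSubcategory (fun X : Type u => Nonempty X ∧ Cardinal.mk X ≤ κ) ⥤
         ObjectProperty.FullSubcategory (fun X : Type u => Nonempty X ∧ Cardinal.mk X ≤ κ')) :
    ∃ d, Nonempty (F ≅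
      (Functor.const (ObjectProperty.FullSubcategory (fun X : Type u => Nonempty X ∧ Cardinal.mk X ≤ κ))).obj d) := by
  classical
  obtain ⟨K, hK⟩ : ∃ K : Type u, Cardinal.mk K = κ := ⟨κ.out, Cardinal.mk_out κ⟩
  haveI hKinf : Infinite K := by rw [Cardinal.infinite_iff, hK]; exact hκ
  obtain ⟨k0, k1, hk01⟩ := exists_pair_ne K
  have hKK : Cardinal.mk (K × K) = κ := by
    simp [Cardinal.mk_prod, hK, Cardinal.mul_eq_self hκ]
  have hKKK : Cardinal.mk ((K × K) × K) = κ := by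
    simp [Cardinal.mk_prod, hKK, hK, Cardinal.mul_eq_self hκ]
  have hSum : Cardinal.mk ((K × K) ⊕ (K × K)) = κ := by
    simp [Cardinal.mk_sum, hKK, Cardinal.add_eq_self hκ]
  let OW : ObjectProperty.FullSubcategory (fun X : Type u => Nonempty X ∧ Cardinal.mk X ≤ κ) :=
    ⟨K × K, ⟨(k0, k0)⟩, hKK.le⟩
  let OA : ObjectProperty.FullSubcategory (fun X : Type u => Nonempty X ∧ Cardinal.mk X ≤ κ) :=
    ⟨(K × K) × K, ⟨((k0, k0), k0)⟩, hKKK.le⟩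
  let OS : ObjectProperty.FullSubcategory (fun X : Type u => Nonempty X ∧ Cardinal.mk X ≤ κ) :=
    ⟨(K × K) ⊕ (K × K), ⟨Sum.inl (k0, k0)⟩, hSum.le⟩
  -- the functions u_S and corresponding morphisms
  let us : Set K → (K × K) → K := fun S p => if p.2 ∈ S then k1 else k0
  let jm : Set K → (OW ⟶ OA) := fun S => ObjectProperty.homMk (TypeCat.ofHom fun p => (p, us S p))
  -- cardinality bound
  have hcantor : κ < 2 ^ κ := Cardinal.cantor κ
  have h4 : κ' ^ κ' < 2 ^ κ := by
    rcases lt_or_ge κ' Cardinal.aleph0 with hfin | hinf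
    · exact lt_of_lt_of_le (Cardinal.power_lt_aleph0 hfin hfin) (hκ.trans hcantor.le)
    · calc κ' ^ κ' = 2 ^ κ' := Cardinal.power_self_eq hinf
        _ ≤ κ := h
        _ < 2 ^ κ := hcantor
  haveI : Nonempty (F.obj OA).obj := (F.obj OA).property.1
  have hΦ : ¬ Function.Injective (fun S => F.map (jm S)) := by
    intro hinj
    have h1 : Cardinal.mk (Set K) ≤ Cardinal.mk ((F.obj OW).obj → (F.obj OA).obj) :=
      Cardinal.mk_le_of_injective (f := fun S => ((F.map (jm S)).hom : (F.obj OW).obj → (F.obj OA).obj))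
        (fun a b hab => hinj (by ext x; exact congrFun hab x))
    have h3 : Cardinal.mk ((F.obj OW).obj → (F.obj OA).obj) ≤ κ' ^ κ' := by
      rw [← Cardinal.power_def]
      calc (Cardinal.mk (F.obj OA).obj) ^ (Cardinal.mk (F.obj OW).obj)
          ≤ (Cardinal.mk (F.obj OA).obj) ^ κ' :=
            Cardinal.power_le_power_left (Cardinal.mk_ne_zero _) (F.obj OW).property.2
        _ ≤ κ' ^ κ' := Cardinal.power_le_power_right (F.obj OA).property.2
    rw [Cardinal.mk_set, hK] at h1
    exact absurd (h1.trans h3) (not_le.mpr h4)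
  obtain ⟨S, T, hFST, hST⟩ := Function.not_injective_iff.mp hΦ
  replace hFST : F.map (jm S) = F.map (jm T) := hFST
  -- the difference set
  obtain ⟨y, hy⟩ : ∃ y, ¬ ((y ∈ S) ↔ (y ∈ T)) := by
    by_contra hc
    push_neg at hc
    exact hST (Set.ext hc)
  have hyne : ∀ x : K, us S (x, y) ≠ us T (x, y) := by
    intro x
    by_cases hyS : y ∈ S <;> by_cases hyT : y ∈ T
    · exact absurd (iff_of_true hyS hyT) hy
    · simp only [us, hyS, hyT, if_pos, if_neg, if_true]
      simpa using hk01.symm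
    · simp only [us, hyS, hyT]
      simpa using hk01
    · exact absurd (iff_of_false hyS hyT) hy
  let D : Set (K × K) := {p | us S p ≠ us T p}
  have hDge : κ ≤ Cardinal.mk D := by
    rw [← hK]
    exact Cardinal.mk_le_of_injective (f := fun x : K => (⟨(x, y), hyne x⟩ : D))
      (by intro a b hab; simpa using congrArg (fun q : D => q.1.1) hab)
  have hDeq : Cardinal.mk (K × K) = Cardinal.mk D :=
    hKK.trans (le_antisymm ((Cardinal.mk_subtype_le _).trans hKK.le) hDge).symm
  let φe : (K × K) ≃ D := Classical.choice (Cardinal.eq.mp hDeq)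
  let φm : OW ⟶ OW := ObjectProperty.homMk (TypeCat.ofHom fun w => (φe w : K × K))
  let ψm : OA ⟶ OS := ObjectProperty.homMk (TypeCat.ofHom fun (ab : (K × K) × K) =>
    if hab : us S ab.1 ≠ us T ab.1 then
      (if ab.2 = us S ab.1 then Sum.inl (φe.symm ⟨ab.1, hab⟩) else Sum.inr (φe.symm ⟨ab.1, hab⟩))
    else Sum.inl ab.1)
  let inlm : OW ⟶ OS := ObjectProperty.homMk (TypeCat.ofHom Sum.inl)
  let inrm : OW ⟶ OS := ObjectProperty.homMk (TypeCat.ofHom Sum.inr)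
  have hφD : ∀ w : K × K, us S (φe w : K × K) ≠ us T (φe w : K × K) := fun w => (φe w).2
  have hcomp1 : φm ≫ jm S ≫ ψm = inlm := by
    ext w
    show ψm.hom ((jm S).hom (φm.hom w)) = Sum.inl w
    simp only [ψm, jm, φm, ObjectProperty.homMk_hom, TypeCat.ofHom_apply, dif_pos (hφD w), if_pos rfl]
    congr 1
    have : (⟨(φe w : K × K), hφD w⟩ : D) = φe w := rfl
    rw [this, Equiv.symm_apply_apply]
    simp
  have hcomp2 : φm ≫ jm T ≫ ψm = inrm := by
    ext w
    show ψm.hom ((jm T).hom (φm.hom w)) = Sum.inr w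
    have hne : ¬ (us T (φe w : K × K) = us S (φe w : K × K)) := fun hc => (hφD w) hc.symm
    simp only [ψm, jm, φm, ObjectProperty.homMk_hom, TypeCat.ofHom_apply, dif_pos (hφD w), if_neg hne]
    congr 1
    have : (⟨(φe w : K × K), hφD w⟩ : D) = φe w := rfl
    rw [this, Equiv.symm_apply_apply]
  have key : F.map inlm = F.map inrm := by
    rw [← hcomp1, ← hcomp2, F.map_comp, F.map_comp, F.map_comp, F.map_comp, hFST]
  -- the collapse lemma
  have collapse : ∀ (X Y : ObjectProperty.FullSubcategory (fun X : Type u => Nonempty X ∧ Cardinal.mk X ≤ κ))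
      (f g : X ⟶ Y), F.map f = F.map g := by
    intro X Y f g
    haveI hXne : Nonempty X.obj := X.property.1
    obtain ⟨e⟩ : Nonempty (X.obj ↪ (K × K)) := by
      rw [← Cardinal.le_def, hKK]; exact X.property.2
    let r : (K × K) → X.obj := Function.invFun e
    have hre : ∀ x, r (e x) = x := Function.leftInverse_invFun e.injective
    let em : X ⟶ OW := ObjectProperty.homMk (TypeCat.ofHom fun x => e x)
    let hmm : OS ⟶ Y := ObjectProperty.homMk (TypeCat.ofHom (Sum.elim (fun w => f.hom (r w)) (fun w => g.hom (r w)) : OS.obj → Y.obj))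
    have hf : f = em ≫ inlm ≫ hmm := by
      ext x
      show f.hom x = hmm.hom (Sum.inl (e x))
      simp only [hmm, ObjectProperty.homMk_hom, TypeCat.ofHom_apply, Sum.elim_inl, hre]
    have hg : g = em ≫ inrm ≫ hmm := by
      ext x
      show g.hom x = hmm.hom (Sum.inr (e x))
      simp only [hmm, ObjectProperty.homMk_hom, TypeCat.ofHom_apply, Sum.elim_inr, hre]
    rw [hf, hg, F.map_comp, F.map_comp, F.map_comp, F.map_comp, key]
  -- assemble the natural isomorphism
  let pt : ObjectProperty.FullSubcategory (fun X : Type u => Nonempty X ∧ Cardinal.mk X ≤ κ) :=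
    ⟨PUnit.{u+1}, ⟨⟨⟩⟩, by
      rw [Cardinal.mk_punit]
      exact Cardinal.one_lt_aleph0.le.trans hκ⟩
  refine ⟨F.obj pt, ⟨NatIso.ofComponents (fun X =>
    { hom := F.map (ObjectProperty.homMk (TypeCat.ofHom (fun _ => PUnit.unit : X.obj → PUnit)) : X ⟶ pt)
      inv := F.map (ObjectProperty.homMk (TypeCat.ofHom (fun _ => Classical.choice X.property.1 : PUnit → X.obj)) : pt ⟶ X)
      hom_inv_id := by
        rw [← F.map_comp, collapse X X _ (𝟙 X), F.map_id]
      inv_hom_id := by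
        rw [← F.map_comp, collapse pt pt _ (𝟙 pt), F.map_id]
        rfl }) ?_⟩⟩
  intro X Y f
  simp only [Functor.const_obj_map, Category.comp_id]
  rw [← F.map_comp]
  exact collapse _ _ _ _
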